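/- (Lemma on the intervention operator, part 1.) Let C be a transaction cost function, let a ≤ b be reals, and let f : [a,b] × 𝒮̄ → ℝ be lower semicontinuous. Then the ℝ ∪ {+∞}-valued function M[f] is lower semicontinuous on [a,b] × 𝒮̄; equivalently, M[f]_*(t,x) = M[f](t,x) for all (t,x) ∈ [a,b] × 𝒮̄. -/

import Mathlib

open Set Filter
open Topology

/-- The closed positive quadrant of portfolio positions. -/
def Sbar : Set (ℝ × ℝ) := Set.Ici 0 ×ˢ Set.Ici 0

/-- A transaction cost function. -/
def IsCostFn (C : ℝ → ℝ) : Prop :=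
  Continuous C ∧ (∀ d₁ d₂ : ℝ, |d₁| ≤ |d₂| → C d₁ ≤ C d₂) ∧ 0 < C 0 ∧
    StrictMono (fun d => d + C d) ∧ Set.Ici (0 : ℝ) ⊆ Set.range (fun d => d + C d)

/-- The rebalancing map. -/
def Gam (C : ℝ → ℝ) (x : ℝ × ℝ) (d : ℝ) : ℝ × ℝ := (x.1 - d - C d, x.2 + d)

/-- The set of feasible transactions. -/
def Dset (C : ℝ → ℝ) (x : ℝ × ℝ) : Set ℝ := {d | Gam C x d ∈ Sbar}

/-- The intervention operator on time-dependent functions,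
with value `+∞` if no transaction is feasible. -/
noncomputable def MopT (C : ℝ → ℝ) (f : ℝ × (ℝ × ℝ) → ℝ) (p : ℝ × (ℝ × ℝ)) : EReal :=
  ⨅ d ∈ Dset C p.2, ((f (p.1, Gam C p.2 d) : ℝ) : EReal)

/-- Lower semicontinuous envelope of `h` computed on `E`. -/
noncomputable def lscEnv {α : Type*} [TopologicalSpace α]
    (h : α → EReal) (E : Set α) (z : α) : EReal :=
  Filter.liminf h (nhdsWithin z E)

/-- (Lemma on the intervention operator, part 1: `M[f]` is lower semicontinuous
for lower semicontinuous `f`, equivalently `M[f]_* = M[f]` on the domain.) -/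
theorem intervention_lsc
    (C : ℝ → ℝ) (hC : IsCostFn C)
    (a b : ℝ) (hab : a ≤ b)
    (f : ℝ × (ℝ × ℝ) → ℝ)
    (hf : LowerSemicontinuousOn f (Set.Icc a b ×ˢ Sbar)) :
    LowerSemicontinuousOn (MopT C f) (Set.Icc a b ×ˢ Sbar) ∧
    ∀ p ∈ Set.Icc a b ×ˢ Sbar,
      lscEnv (MopT C f) (Set.Icc a b ×ˢ Sbar) p = MopT C f p := by
  obtain ⟨hCont, hMono, hC0, hSM, hRange⟩ := hC
  set S : Set (ℝ × (ℝ × ℝ)) := Set.Icc a b ×ˢ Sbar with hS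
  have hSbarClosed : IsClosed Sbar := isClosed_Ici.prod isClosed_Ici
  -- bounds on feasible transactions
  have hDbound : ∀ (x : ℝ × ℝ) (d : ℝ), d ∈ Dset C x → -x.2 ≤ d ∧ d ≤ x.1 := by
    intro x d hd
    obtain ⟨h1, h2⟩ := hd
    simp only [Gam, Set.mem_Ici] at h1 h2
    constructor
    · linarith
    · have hCd : C 0 ≤ C d := hMono 0 d (by simpa using abs_nonneg d)
      linarith
  have key : LowerSemicontinuousOn (MopT C f) S := by
    intro p hp y hy
    obtain ⟨r, hyr, hrM⟩ := EReal.lt_iff_exists_real_btwn.1 hy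
    have hsuff : ∀ᶠ q in 𝓝[S] p, (r : EReal) ≤ MopT C f q := by
      by_contra hcon
      have hfreq : ∃ᶠ q in 𝓝[S] p, MopT C f q < r := by
        simpa only [Filter.not_eventually, not_le] using hcon
      have hfreq2 : ∃ᶠ q in 𝓝[S] p, q ∈ S ∧ MopT C f q < r :=
        (hfreq.and_eventually (eventually_mem_nhdsWithin)).mono fun q hq => ⟨hq.2, hq.1⟩
      obtain ⟨u, hu, hP⟩ := Filter.exists_seq_forall_of_frequently hfreq2
      have hu' : Filter.Tendsto u Filter.atTop (𝓝 p) := hu.mono_right nhdsWithin_le_nhds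
      have huS : ∀ n, u n ∈ S := fun n => (hP n).1
      have hMlt : ∀ n, MopT C f (u n) < r := fun n => (hP n).2
      have hex : ∀ n, ∃ d, ∃ _ : d ∈ Dset C (u n).2,
          ((f ((u n).1, Gam C (u n).2 d) : ℝ) : EReal) < (r : EReal) := by
        intro n
        have := hMlt n
        rw [MopT, iInf_lt_iff] at this
        obtain ⟨d, hd⟩ := this
        rw [iInf_lt_iff] at hd
        obtain ⟨hmem, hlt⟩ := hd
        exact ⟨d, hmem, hlt⟩
      choose d hd hfd using hex
      -- component tendsto
      have h1 : Filter.Tendsto (fun n => (u n).2.1) Filter.atTop (𝓝 p.2.1) :=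
        ((continuous_fst.comp continuous_snd).tendsto p).comp hu'
      have h2 : Filter.Tendsto (fun n => (u n).2.2) Filter.atTop (𝓝 p.2.2) :=
        ((continuous_snd.comp continuous_snd).tendsto p).comp hu'
      have h0 : Filter.Tendsto (fun n => (u n).1) Filter.atTop (𝓝 p.1) :=
        (continuous_fst.tendsto p).comp hu'
      obtain ⟨M₁, hM₁⟩ := h1.bddAbove_range
      obtain ⟨M₂, hM₂⟩ := h2.bddAbove_range
      have hdmem : ∀ n, d n ∈ Set.Icc (-M₂) M₁ := by
        intro n
        obtain ⟨hl, hr⟩ := hDbound _ _ (hd n)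
        constructor
        · have : (u n).2.2 ≤ M₂ := hM₂ ⟨n, rfl⟩
          linarith
        · exact hr.trans (hM₁ ⟨n, rfl⟩)
      obtain ⟨dstar, _, φ, hφ, hdφ⟩ := isCompact_Icc.tendsto_subseq hdmem
      -- convergence of Γ along the subsequence
      have hGamTend : Filter.Tendsto (fun n => Gam C (u (φ n)).2 (d (φ n)))
          Filter.atTop (𝓝 (Gam C p.2 dstar)) := by
        have hdφ' : Filter.Tendsto (fun n => d (φ n)) Filter.atTop (𝓝 dstar) := hdφ
        have h1' : Filter.Tendsto (fun n => (u (φ n)).2.1) Filter.atTop (𝓝 p.2.1) :=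
          h1.comp hφ.tendsto_atTop
        have h2' : Filter.Tendsto (fun n => (u (φ n)).2.2) Filter.atTop (𝓝 p.2.2) :=
          h2.comp hφ.tendsto_atTop
        have hCφ : Filter.Tendsto (fun n => C (d (φ n))) Filter.atTop (𝓝 (C dstar)) :=
          (hCont.tendsto dstar).comp hdφ'
        exact ((h1'.sub hdφ').sub hCφ).prodMk_nhds (h2'.add hdφ')
      have hGamS : Gam C p.2 dstar ∈ Sbar :=
        hSbarClosed.mem_of_tendsto hGamTend (Filter.Eventually.of_forall fun n => hd (φ n))
      have hdstar : dstar ∈ Dset C p.2 := hGamS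
      have hMle : MopT C f p ≤ ((f (p.1, Gam C p.2 dstar) : ℝ) : EReal) :=
        iInf₂_le dstar hdstar
      have hrf : (r : EReal) < ((f (p.1, Gam C p.2 dstar) : ℝ) : EReal) := hrM.trans_le hMle
      have hqS : (p.1, Gam C p.2 dstar) ∈ S := ⟨hp.1, hGamS⟩
      have hrf' : r < f (p.1, Gam C p.2 dstar) := by exact_mod_cast hrf
      have hlsc := hf _ hqS r hrf'
      -- the sequence tends to the point within S
      have hzTend : Filter.Tendsto (fun n => ((u (φ n)).1, Gam C (u (φ n)).2 (d (φ n))))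
          Filter.atTop (𝓝[S] (p.1, Gam C p.2 dstar)) := by
        rw [tendsto_nhdsWithin_iff]
        constructor
        · exact ((h0.comp hφ.tendsto_atTop)).prodMk_nhds hGamTend
        · exact Filter.Eventually.of_forall fun n => ⟨(huS (φ n)).1, hd (φ n)⟩
      obtain ⟨n, hn⟩ := (hzTend.eventually hlsc).exists
      have : f ((u (φ n)).1, Gam C (u (φ n)).2 (d (φ n))) < r := by exact_mod_cast hfd (φ n)
      exact absurd this (not_lt.2 hn.le)
    exact hsuff.mono fun q hq => lt_of_lt_of_le hyr hq
  refine ⟨key, fun p hp => ?_⟩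
  refine le_antisymm ?_ ?_
  · have hpure : pure p ≤ 𝓝[S] p := le_inf (pure_le_nhds p) (Filter.le_principal_iff.2 hp)
    have hfr : ∃ᶠ q in 𝓝[S] p, MopT C f q ≤ MopT C f p := by
      exact Filter.Frequently.filter_mono ((Filter.eventually_pure.2 le_rfl).frequently) hpure
    exact Filter.liminf_le_of_frequently_le' hfr
  · exact LowerSemicontinuousWithinAt.le_liminf (key p hp)
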